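/- Let 0 < α < 1 and K₀ > 1, and let A be an invertible 2×2 real matrix with entries A₁₁, A₁₂, A₂₁, A₂₂ satisfying (H1) |A₂₁| + α|A₂₂| + α²|A₁₂| ≤ α|A₁₁|, (H2) |A₁₁| − α|A₁₂| ≥ K₀, (H3) |A₁₂| + α|A₂₂| + α²|A₂₁| ≤ α|A₁₁|, and (H4) |A₁₁| − α|A₂₁| ≥ |det A|·K₀. Then (i) |A₁₂| ≤ α|A₁₁|, (ii) |A₂₁| ≤ α|A₁₁|, and (iii) |A₂₂| ≤ (1/K₀² + α²)·|A₁₁|. -/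

import Mathlib

/-- The basic consequences of the hyperbolicity conditions H1–H4 for a matrix `A` (with entries
playing the roles of the partial derivatives `F₁ₓ, F₁ᵧ, F₂ₓ, F₂ᵧ`):
`|F₁ᵧ| ≤ α|F₁ₓ|`, `|F₂ₓ| ≤ α|F₁ₓ|` and `|F₂ᵧ| ≤ (1/K₀² + α²)|F₁ₓ|`. -/
theorem entry_estimates
    (α K₀ : ℝ) (hα0 : 0 < α) (hα1 : α < 1) (hK : 1 < K₀)
    (A11 A12 A21 A22 : ℝ)
    (hdet : A11 * A22 - A12 * A21 ≠ 0)
    (hH1 : |A21| + α * |A22| + α ^ 2 * |A12| ≤ α * |A11|)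
    (hH2 : K₀ ≤ |A11| - α * |A12|)
    (hH3 : |A12| + α * |A22| + α ^ 2 * |A21| ≤ α * |A11|)
    (hH4 : |A11 * A22 - A12 * A21| * K₀ ≤ |A11| - α * |A21|) :
    |A12| ≤ α * |A11| ∧ |A21| ≤ α * |A11| ∧
    |A22| ≤ (1 / K₀ ^ 2 + α ^ 2) * |A11| := by
  have h22 : (0:ℝ) ≤ |A22| := abs_nonneg _
  have h21 : (0:ℝ) ≤ |A21| := abs_nonneg _
  have h12n : (0:ℝ) ≤ |A12| := abs_nonneg _
  have hα2 : (0:ℝ) < α ^ 2 := by positivity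
  have h12 : |A12| ≤ α * |A11| := by nlinarith
  have h21' : |A21| ≤ α * |A11| := by nlinarith
  have hK0 : (0:ℝ) < K₀ := by linarith
  have ha : K₀ ≤ |A11| := by nlinarith
  have ha0 : (0:ℝ) < |A11| := by linarith
  refine ⟨h12, h21', ?_⟩
  have hd : |A11 * A22 - A12 * A21| ≤ |A11| / K₀ := by
    rw [le_div_iff₀ hK0]; nlinarith
  have htri : |A11| * |A22| ≤ |A11 * A22 - A12 * A21| + |A12| * |A21| := by
    calc |A11| * |A22| = |A11 * A22| := (abs_mul _ _).symm
    _ = |(A11 * A22 - A12 * A21) + A12 * A21| := by ring_nf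
    _ ≤ |A11 * A22 - A12 * A21| + |A12 * A21| := abs_add_le _ _
    _ = |A11 * A22 - A12 * A21| + |A12| * |A21| := by rw [abs_mul]
  rw [← mul_le_mul_iff_right₀ ha0]
  have hdd : |A11 * A22 - A12 * A21| ≤ |A11| ^ 2 / K₀ ^ 2 := by
    calc |A11 * A22 - A12 * A21| ≤ |A11| / K₀ := hd
    _ ≤ |A11| ^ 2 / K₀ ^ 2 := by
        rw [div_le_div_iff₀ hK0 (by positivity)]; nlinarith [mul_le_mul_of_nonneg_left ha (mul_pos ha0 hK0).le]
  have h1212 : |A12| * |A21| ≤ α ^ 2 * |A11| ^ 2 := by nlinarith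
  have : |A11| * |A22| ≤ |A11| ^ 2 / K₀ ^ 2 + α ^ 2 * |A11| ^ 2 := by linarith
  calc |A11| * |A22| ≤ |A11| ^ 2 / K₀ ^ 2 + α ^ 2 * |A11| ^ 2 := this
  _ = |A11| * ((1 / K₀ ^ 2 + α ^ 2) * |A11|) := by ring
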